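/- Let B be a K×K stochastic matrix with all diagonal entries positive, let T ≥ 1 be an integer, and let u : ℕ → ℝ be T-periodic (u(k+T) = u(k) for all k) with Σ_{k=0}^{T−1} u(k) = 0. Then the limit Z_2 = lim_{n→∞} Σ_{k=0}^{nT} B^{nT−k} u(k) exists in the space of K×K real matrices. -/

import Mathlib

open Finset Filter Topology Matrix

/-- An `n × n` real matrix is stochastic if all entries are nonnegative and
every row sums to `1`. -/
def IsStochastic {n : ℕ} (A : Matrix (Fin n) (Fin n) ℝ) : Prop :=
  (∀ i j, 0 ≤ A i j) ∧ ∀ i, ∑ j, A i j = 1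

/-- A clustering of `{1,…,n}`: pairwise disjoint subsets whose union is everything. -/
def IsClustering {n K : ℕ} (C : Fin K → Finset (Fin n)) : Prop :=
  (∀ p q, p ≠ q → Disjoint (C p) (C q)) ∧ ∀ i, ∃ p, i ∈ C p

/-- Reachability along directed edges of `G(A)`: edge from `j` to `i` iff `A i j > 0`. -/
def Reaches {n : ℕ} (A : Matrix (Fin n) (Fin n) ℝ) : Fin n → Fin n → Prop :=
  Relation.ReflTransGen fun j i => 0 < A i j

/-- `A` has cluster-spanning-trees w.r.t. `C`: for each cluster there is a vertex from
which every vertex of the cluster is reachable in `G(A)`. -/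
def HasClusterSpanningTrees {n K : ℕ} (C : Fin K → Finset (Fin n))
    (A : Matrix (Fin n) (Fin n) ℝ) : Prop :=
  ∀ p, ∃ v, ∀ i ∈ C p, Reaches A v i

/-- Inter-cluster common influence: `∑_{j ∈ C q} A i j` is the same for all `i ∈ C p`. -/
def InterClusterCommonInfluence {n K : ℕ} (C : Fin K → Finset (Fin n))
    (A : Matrix (Fin n) (Fin n) ℝ) : Prop :=
  ∀ p q, ∀ i ∈ C p, ∀ i' ∈ C p, ∑ j ∈ C q, A i j = ∑ j ∈ C q, A i' j

/-- Cluster ergodicity coefficient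
`μ_C(A) = min_p min_{i,j ∈ C p} ∑_k min (A i k) (A j k)`. -/
noncomputable def muC {n K : ℕ} (C : Fin K → Finset (Fin n))
    (A : Matrix (Fin n) (Fin n) ℝ) : ℝ :=
  sInf {s | ∃ p, ∃ i ∈ C p, ∃ j ∈ C p, s = ∑ k, min (A i k) (A j k)}

/-- Cluster Hajnal diameter `Δ_C(A) = max_p max_{i,j ∈ C p} max_k |A i k - A j k|`. -/
noncomputable def DeltaC {n K : ℕ} (C : Fin K → Finset (Fin n))
    (A : Matrix (Fin n) (Fin n) ℝ) : ℝ :=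
  sSup {d | ∃ p, ∃ i ∈ C p, ∃ j ∈ C p, ∃ k, d = |A i k - A j k|}

/-- The cluster-consensus subspace `S_C`. -/
def SC {n K : ℕ} (C : Fin K → Finset (Fin n)) : Set (Fin n → ℝ) :=
  {x | ∀ p, ∀ i ∈ C p, ∀ j ∈ C p, x i = x j}

/-- Left product `prodFrom A a m = A (a+m-1) * ⋯ * A (a+1) * A a` (with `m` factors). -/
def prodFrom {n : ℕ} (A : ℕ → Matrix (Fin n) (Fin n) ℝ) (a : ℕ) :
    ℕ → Matrix (Fin n) (Fin n) ℝ
  | 0 => 1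
  | m + 1 => A (a + m) * prodFrom A a m

-- helper: sum over range (a+s)
private lemma sum_range_add' (F : ℕ → ℝ) (a s : ℕ) :
    ∑ i ∈ Finset.range (a + s), F i
      = (∑ i ∈ Finset.range a, F i) + ∑ i ∈ Finset.range s, F (a + i) := by
  rw [Finset.range_eq_Ico, ← Finset.sum_Ico_consecutive _ (Nat.zero_le a) (by omega : a ≤ a + s)]
  congr 1
  all_goals (rw [Finset.sum_Ico_eq_sum_range]; simp)

private lemma norm_mulVec_le {K : ℕ} {B : Matrix (Fin K) (Fin K) ℝ}
    (hB : IsStochastic B) (x : Fin K → ℂ) :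
    ‖(B.map (fun r => (r : ℂ))) *ᵥ x‖ ≤ ‖x‖ := by
  rw [pi_norm_le_iff_of_nonneg (norm_nonneg x)]
  intro i
  calc ‖((B.map (fun r => (r : ℂ))) *ᵥ x) i‖
      = ‖∑ j, ((B i j : ℂ)) * x j‖ := by
        simp [Matrix.mulVec, dotProduct, Matrix.map_apply]
    _ ≤ ∑ j, ‖((B i j : ℂ)) * x j‖ := norm_sum_le _ _
    _ = ∑ j, B i j * ‖x j‖ := by
        refine Finset.sum_congr rfl fun j _ => ?_
        rw [norm_mul, Complex.norm_real, Real.norm_eq_abs, abs_of_nonneg (hB.1 i j)]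
    _ ≤ ∑ j, B i j * ‖x‖ := by
        refine Finset.sum_le_sum fun j _ => ?_
        exact mul_le_mul_of_nonneg_left (norm_le_pi_norm x j) (hB.1 i j)
    _ = ‖x‖ := by rw [← Finset.sum_mul, hB.2 i, one_mul]

open Module in
private lemma summable_abs_pow_diff {K : ℕ} {B : Matrix (Fin K) (Fin K) ℝ}
    (hB : IsStochastic B) (hdiag : ∀ p, 0 < B p p) (p q : Fin K) :
    Summable fun m => |(B ^ (m + 1)) p q - (B ^ m) p q| := by
  classical
  set B' : Matrix (Fin K) (Fin K) ℂ := B.map (fun r => (r : ℂ)) with hB'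
  set f : Module.End ℂ (Fin K → ℂ) := Matrix.toLin' B' with hf
  -- powers of B' are maps of powers of B
  have hpow : ∀ m : ℕ, B' ^ m = (B ^ m).map (fun r => (r : ℂ)) := by
    intro m
    induction m with
    | zero =>
      ext i j
      simp [Matrix.one_apply, Matrix.map_apply, apply_ite]
    | succ m ih =>
      rw [pow_succ, pow_succ, ih]
      ext i j
      simp [Matrix.mul_apply, Matrix.map_apply]
      push_cast
      rfl
  have hfapp : ∀ x, f x = B' *ᵥ x := fun x => Matrix.toLin'_apply B' x
  have hfpow : ∀ (m : ℕ) (x), (f ^ m) x = B' ^ m *ᵥ x := by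
    intro m
    induction m with
    | zero => intro x; simp
    | succ m ih =>
      intro x
      rw [pow_succ, Module.End.mul_apply, hfapp, ih, Matrix.mulVec_mulVec, ← pow_succ]
  have hnorm : ∀ x, ‖f x‖ ≤ ‖x‖ := by
    intro x; rw [hfapp]; exact norm_mulVec_le hB x
  have hnormpow : ∀ (m : ℕ) (x), ‖(f ^ m) x‖ ≤ ‖x‖ := by
    intro m
    induction m with
    | zero => intro x; simp
    | succ m ih =>
      intro x
      rw [pow_succ', Module.End.mul_apply]
      exact le_trans (hnorm _) (ih x)
  -- eigenvalue dichotomy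
  have heig : ∀ μ : ℂ, Module.End.HasEigenvalue f μ → μ = 1 ∨ ‖μ‖ < 1 := by
    intro μ hμ
    have hle : ‖μ‖ ≤ 1 := by
      obtain ⟨v, hv, hv0⟩ := hμ.exists_hasEigenvector
      have hfv : f v = μ • v := Module.End.mem_genEigenspace_one.mp hv
      have h1 : ‖μ‖ * ‖v‖ ≤ ‖v‖ := by rw [← norm_smul, ← hfv]; exact hnorm v
      have hv0' : 0 < ‖v‖ := norm_pos_iff.mpr hv0
      nlinarith [norm_nonneg μ]
    by_cases hlt : ‖μ‖ < 1
    · exact Or.inr hlt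
    left
    have habs : ‖μ‖ = 1 := le_antisymm hle (not_lt.1 hlt)
    obtain ⟨i, hi⟩ := eigenvalue_mem_ball hμ
    have hrad : ∑ j ∈ Finset.univ.erase i, ‖B' i j‖ = 1 - B i i := by
      have h2 : B i i + ∑ j ∈ Finset.univ.erase i, B i j = ∑ j, B i j :=
        Finset.add_sum_erase _ _ (Finset.mem_univ i)
      have h3 : ∑ j ∈ Finset.univ.erase i, ‖B' i j‖ = ∑ j ∈ Finset.univ.erase i, B i j := by
        refine Finset.sum_congr rfl fun j _ => ?_
        rw [hB', Matrix.map_apply, Complex.norm_real, Real.norm_eq_abs, abs_of_nonneg (hB.1 i j)]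
      rw [h3]
      rw [hB.2 i] at h2
      linarith
    rw [hrad, Metric.mem_closedBall, dist_eq_norm] at hi
    have hBii : B' i i = ((B i i : ℝ) : ℂ) := rfl
    rw [hBii] at hi
    have hd0 : 0 < B i i := hdiag i
    have hd1 : B i i ≤ 1 := by
      have := hB.2 i
      have h4 : B i i ≤ ∑ j, B i j := Finset.single_le_sum (fun j _ => hB.1 i j) (Finset.mem_univ i)
      linarith
    -- squared inequalities
    have hsq1 : μ.re ^ 2 + μ.im ^ 2 = 1 := by
      have := Complex.sq_norm μ
      rw [Complex.normSq_apply] at this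
      have h5 : ‖μ‖ = 1 := habs
      nlinarith [this]
    have hsq2 : (μ.re - B i i) ^ 2 + μ.im ^ 2 ≤ (1 - B i i) ^ 2 := by
      have h6 : Complex.normSq (μ - ((B i i : ℝ) : ℂ)) ≤ (1 - B i i) ^ 2 := by
        rw [← Complex.sq_norm]
        exact pow_le_pow_left₀ (norm_nonneg _) hi 2
      rw [Complex.normSq_apply] at h6
      simp only [Complex.sub_re, Complex.ofReal_re, Complex.sub_im, Complex.ofReal_im,
        sub_zero] at h6
      nlinarith [h6]
    have hre : μ.re = 1 := by nlinarith
    have him : μ.im = 0 := by nlinarith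
    exact Complex.ext (by simpa using hre) (by simpa using him)
  -- semisimplicity at eigenvalue 1
  have hsemi : ∀ (k : ℕ) (x : Fin K → ℂ), ((f - 1) ^ k) x = 0 → f x = x := by
    intro k
    induction k with
    | zero =>
      intro x hx
      simp only [pow_zero, Module.End.one_apply] at hx
      rw [hx]; exact map_zero f
    | succ k ih =>
      intro x hx
      have hy : ((f - 1) ^ k) ((f - 1) x) = 0 := by
        rw [← Module.End.mul_apply, ← pow_succ]
        exact hx
      have hfy : f ((f - 1) x) = (f - 1) x := ih _ hy
      set y := (f - 1) x with hyd
      have hyx : y = f x - x := by rw [hyd]; simp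
      have hlin : ∀ m : ℕ, (f ^ m) x = x + (m : ℂ) • y := by
        intro m
        induction m with
        | zero => simp
        | succ m ihm =>
          have hfx : f x = x + y := by rw [hyx]; abel
          rw [pow_succ', Module.End.mul_apply, ihm, map_add, _root_.map_smul, hfy, hfx]
          push_cast
          module
      have hy0 : y = 0 := by
        by_contra hy0
        have hny : 0 < ‖y‖ := norm_pos_iff.mpr hy0
        obtain ⟨m, hm⟩ := exists_nat_gt (2 * ‖x‖ / ‖y‖)
        have h1 : ‖(m : ℂ) • y‖ ≤ 2 * ‖x‖ := by
          have h2 : ‖(m : ℂ) • y‖ = ‖(x + (m : ℂ) • y) - x‖ := by congr 1; abel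
          have h3 : ‖x + (m : ℂ) • y‖ ≤ ‖x‖ := by rw [← hlin m]; exact hnormpow m x
          calc ‖(m : ℂ) • y‖ = ‖(x + (m : ℂ) • y) - x‖ := h2
            _ ≤ ‖x + (m : ℂ) • y‖ + ‖x‖ := norm_sub_le _ _
            _ ≤ 2 * ‖x‖ := by linarith
        rw [norm_smul, Complex.norm_natCast] at h1
        rw [div_lt_iff₀ hny] at hm
        linarith
      have : f x - x = 0 := by rw [← hyx]; exact hy0
      exact sub_eq_zero.mp this
  -- geometric decay on generalized eigenspaces with |μ| < ρ
  have hgeo : ∀ (μ : ℂ) (ρ : ℝ), ‖μ‖ < ρ → ∀ (k : ℕ) (x : Fin K → ℂ),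
      ((f - μ • 1) ^ k) x = 0 → ∃ C : ℝ, ∀ m : ℕ, ‖(f ^ m) x‖ ≤ C * ρ ^ m := by
    intro μ ρ hμρ
    have hρ0 : 0 < ρ := lt_of_le_of_lt (norm_nonneg μ) hμρ
    intro k
    induction k with
    | zero =>
      intro x hx
      simp only [pow_zero, Module.End.one_apply] at hx
      refine ⟨0, fun m => ?_⟩
      rw [hx, map_zero]
      simp [le_of_eq]
    | succ k ih =>
      intro x hx
      have hy : ((f - μ • 1) ^ k) ((f - μ • 1) x) = 0 := by
        rw [← Module.End.mul_apply, ← pow_succ]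
        exact hx
      obtain ⟨C₀, hC₀⟩ := ih _ hy
      set y := (f - μ • 1) x with hyd
      have hC₀0 : 0 ≤ C₀ := by
        have := hC₀ 0
        simp only [pow_zero, Module.End.one_apply, mul_one] at this
        exact le_trans (norm_nonneg _) this
      set C : ℝ := max ‖x‖ (C₀ / (ρ - ‖μ‖)) with hC
      have hC0 : 0 ≤ C := le_trans (norm_nonneg x) (le_max_left _ _)
      have hCkey : ‖μ‖ * C + C₀ ≤ ρ * C := by
        have h1 : C₀ / (ρ - ‖μ‖) ≤ C := le_max_right _ _
        have h2 : 0 < ρ - ‖μ‖ := by linarith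
        rw [div_le_iff₀ h2] at h1
        nlinarith
      refine ⟨C, fun m => ?_⟩
      induction m with
      | zero =>
        simp only [pow_zero, Module.End.one_apply, mul_one]
        exact le_max_left _ _
      | succ m ihm =>
        have hfx : f x = μ • x + y := by rw [hyd]; simp
        have hstep : (f ^ (m + 1)) x = μ • ((f ^ m) x) + (f ^ m) y := by
          rw [pow_succ, Module.End.mul_apply, hfx, map_add, _root_.map_smul]
        calc ‖(f ^ (m + 1)) x‖ = ‖μ • ((f ^ m) x) + (f ^ m) y‖ := by rw [hstep]
          _ ≤ ‖μ • ((f ^ m) x)‖ + ‖(f ^ m) y‖ := norm_add_le _ _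
          _ = ‖μ‖ * ‖(f ^ m) x‖ + ‖(f ^ m) y‖ := by rw [norm_smul]
          _ ≤ ‖μ‖ * (C * ρ ^ m) + C₀ * ρ ^ m := by
              have := mul_le_mul_of_nonneg_left ihm (norm_nonneg μ)
              linarith [hC₀ m]
          _ ≤ C * ρ ^ (m + 1) := by
              rw [pow_succ]
              nlinarith [pow_nonneg hρ0.le m]
  -- summability on a single generalized eigenspace
  have hsummgen : ∀ (μ : ℂ) (x : Fin K → ℂ), x ∈ f.maxGenEigenspace μ →
      Summable fun m : ℕ => ‖(f ^ (m + 1)) x - (f ^ m) x‖ := by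
    intro μ x hx
    by_cases hx0 : x = 0
    · subst hx0
      simp only [map_zero, sub_zero, norm_zero]
      exact summable_zero
    obtain ⟨k, hk⟩ := (Module.End.mem_maxGenEigenspace f μ x).1 hx
    have heigval : Module.End.HasEigenvalue f μ := by
      have htop : Module.End.HasUnifEigenvalue f μ ⊤ := by
        rw [Module.End.HasUnifEigenvalue]
        exact Submodule.ne_bot_iff _ |>.mpr ⟨x, hx, hx0⟩
      exact htop.lt zero_lt_one
    rcases heig μ heigval with h1 | hlt
    · subst h1
      have hfx : f x = x := hsemi k x (by simpa [one_smul] using hk)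
      have hfm : ∀ m : ℕ, (f ^ m) x = x := by
        intro m
        induction m with
        | zero => simp
        | succ m ihm => rw [pow_succ, Module.End.mul_apply, hfx, ihm]
      simp only [hfm, sub_self, norm_zero]
      exact summable_zero
    · set ρ : ℝ := (‖μ‖ + 1) / 2 with hρ
      have hρμ : ‖μ‖ < ρ := by rw [hρ]; linarith
      have hρ1 : ρ < 1 := by rw [hρ]; linarith
      have hρ0 : 0 ≤ ρ := le_trans (norm_nonneg μ) hρμ.le
      obtain ⟨C, hC⟩ := hgeo μ ρ hρμ k x hk
      refine Summable.of_nonneg_of_le (fun m => norm_nonneg _) (fun m => ?_)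
        (((summable_geometric_of_lt_one hρ0 hρ1).mul_left (C * ρ + C)))
      calc ‖(f ^ (m + 1)) x - (f ^ m) x‖ ≤ ‖(f ^ (m + 1)) x‖ + ‖(f ^ m) x‖ := norm_sub_le _ _
        _ ≤ C * ρ ^ (m + 1) + C * ρ ^ m := add_le_add (hC _) (hC _)
        _ = (C * ρ + C) * ρ ^ m := by rw [pow_succ]; ring
  -- decompose the standard basis vector
  set e : Fin K → ℂ := Pi.single q 1 with he
  have hmem : e ∈ ⨆ μ : ℂ, f.maxGenEigenspace μ := by
    rw [Module.End.iSup_maxGenEigenspace_eq_top]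
    exact Submodule.mem_top
  obtain ⟨c, hc, hcsum⟩ := (Submodule.mem_iSup_iff_exists_finsupp _ _).1 hmem
  have he2 : e = ∑ μ ∈ c.support, c μ := by rw [← hcsum]; rfl
  have hsump : Summable fun m : ℕ =>
      ∑ μ ∈ c.support, ‖(f ^ (m + 1)) (c μ) - (f ^ m) (c μ)‖ :=
    summable_sum fun μ _ => hsummgen μ (c μ) (hc μ)
  refine Summable.of_nonneg_of_le (fun m => abs_nonneg _) (fun m => ?_) hsump
  have hentry : ∀ m : ℕ, (f ^ m) e p = ((B ^ m) p q : ℂ) := by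
    intro m
    rw [hfpow, hpow, he]
    simp [Matrix.mulVec_single, Matrix.map_apply]
  have hdiffe : (f ^ (m + 1)) e - (f ^ m) e
      = ∑ μ ∈ c.support, ((f ^ (m + 1)) (c μ) - (f ^ m) (c μ)) := by
    have h1 : (f ^ (m + 1)) e = ∑ μ ∈ c.support, (f ^ (m + 1)) (c μ) := by
      rw [he2, map_sum]
    have h2 : (f ^ m) e = ∑ μ ∈ c.support, (f ^ m) (c μ) := by
      rw [he2, map_sum]
    rw [h1, h2, Finset.sum_sub_distrib]
  calc |(B ^ (m + 1)) p q - (B ^ m) p q|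
      = ‖(((B ^ (m + 1)) p q - (B ^ m) p q : ℝ) : ℂ)‖ := by
        rw [Complex.norm_real, Real.norm_eq_abs]
    _ = ‖((f ^ (m + 1)) e - (f ^ m) e) p‖ := by
        rw [Pi.sub_apply, hentry, hentry]
        push_cast
        rfl
    _ ≤ ‖(f ^ (m + 1)) e - (f ^ m) e‖ := norm_le_pi_norm _ p
    _ = ‖∑ μ ∈ c.support, ((f ^ (m + 1)) (c μ) - (f ^ m) (c μ))‖ := by rw [hdiffe]
    _ ≤ ∑ μ ∈ c.support, ‖(f ^ (m + 1)) (c μ) - (f ^ m) (c μ)‖ := norm_sum_le _ _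

private lemma conv_aux (T : ℕ) (u : ℕ → ℝ) (hu : ∀ k, u (k + T) = u k)
    (husum : ∑ k ∈ Finset.range T, u k = 0) (b : ℕ → ℝ)
    (hb : Summable fun i => |b (i + 1) - b i|) :
    ∃ z : ℝ, Tendsto (fun N : ℕ => ∑ k ∈ Finset.range (N * T + 1), u k * b (N * T - k))
      atTop (𝓝 z) := by
  classical
  set g : ℕ → ℝ := fun N => ∑ k ∈ Finset.range (N * T + 1), u k * b (N * T - k) with hg
  -- telescoping
  have teleb : ∀ a s : ℕ, b (a + s) - b a = ∑ i ∈ Finset.range s, (b (a + i + 1) - b (a + i)) := by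
    intro a s
    induction s with
    | zero => simp
    | succ s ih =>
      rw [Finset.sum_range_succ, ← ih]
      show b (a + s + 1) - b a = _
      ring
  -- difference of consecutive g's
  have hdg : ∀ N : ℕ, g (N + 1) - g N
      = ∑ k ∈ Finset.range T, u k * (b (N * T + (T - k)) - b (N * T)) := by
    intro N
    have h1 : (N + 1) * T = N * T + T := by ring
    have hsplit : g (N + 1) = (∑ k ∈ Finset.range T, u k * b (N * T + (T - k))) + g N := by
      have h2 : g (N + 1) = ∑ k ∈ Finset.range (N * T + T + 1), u k * b (N * T + T - k) := by
        rw [hg]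
        simp only [h1]
      have h4 : N * T + T + 1 = T + (N * T + 1) := by ring
      rw [h2, h4, sum_range_add' (fun k => u k * b (N * T + T - k)) T (N * T + 1), hg]
      congr 1
      · refine Finset.sum_congr rfl fun k hk => ?_
        have hkT : k < T := Finset.mem_range.1 hk
        congr 2
        omega
      · refine Finset.sum_congr rfl fun i hi => ?_
        have hia : i < N * T + 1 := Finset.mem_range.1 hi
        have hui : u (T + i) = u i := by rw [add_comm]; exact hu i
        rw [hui]
        congr 2
        omega
    rw [hsplit]
    have h3 : ∑ k ∈ Finset.range T, u k * (b (N * T + (T - k)) - b (N * T))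
        = (∑ k ∈ Finset.range T, u k * b (N * T + (T - k)))
          - (∑ k ∈ Finset.range T, u k) * b (N * T) := by
      rw [Finset.sum_mul, ← Finset.sum_sub_distrib]
      exact Finset.sum_congr rfl fun k _ => by ring
    rw [h3, husum]
    ring
  set W : ℕ → ℝ := fun N => ∑ i ∈ Finset.range T, |b (N * T + i + 1) - b (N * T + i)| with hW
  have hWpart : ∀ M : ℕ, ∑ N ∈ Finset.range M, W N
      = ∑ i ∈ Finset.range (M * T), |b (i + 1) - b i| := by
    intro M
    induction M with
    | zero => simp
    | succ M ih =>
      rw [Finset.sum_range_succ, ih]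
      have h5 : (M + 1) * T = M * T + T := by ring
      rw [h5, sum_range_add' (fun i => |b (i + 1) - b i|) (M * T) T]
  have hWnonneg : ∀ N, 0 ≤ W N := fun N => Finset.sum_nonneg fun i _ => abs_nonneg _
  have hWsum : Summable W := by
    apply summable_of_sum_range_le hWnonneg
    intro M
    rw [hWpart M]
    exact Summable.sum_le_tsum _ (fun i _ => abs_nonneg _) hb
  set c₀ : ℝ := ∑ k ∈ Finset.range T, |u k| with hc₀
  have hdgle : ∀ N, |g (N + 1) - g N| ≤ c₀ * W N := by
    intro N
    rw [hdg N]
    calc |∑ k ∈ Finset.range T, u k * (b (N * T + (T - k)) - b (N * T))|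
        ≤ ∑ k ∈ Finset.range T, |u k * (b (N * T + (T - k)) - b (N * T))| :=
          Finset.abs_sum_le_sum_abs _ _
      _ ≤ ∑ k ∈ Finset.range T, |u k| * W N := by
          refine Finset.sum_le_sum fun k hk => ?_
          rw [abs_mul]
          refine mul_le_mul_of_nonneg_left ?_ (abs_nonneg _)
          rw [teleb (N * T) (T - k)]
          calc |∑ i ∈ Finset.range (T - k), (b (N * T + i + 1) - b (N * T + i))|
              ≤ ∑ i ∈ Finset.range (T - k), |b (N * T + i + 1) - b (N * T + i)| :=
                Finset.abs_sum_le_sum_abs _ _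
            _ ≤ W N := by
                rw [hW]
                refine Finset.sum_le_sum_of_subset_of_nonneg ?_ ?_
                · exact Finset.range_subset_range.2 (by omega)
                · intro i _ _
                  exact abs_nonneg _
      _ = c₀ * W N := by rw [hc₀, ← Finset.sum_mul]
  have hdgsum : Summable fun N => g (N + 1) - g N :=
    Summable.of_abs (Summable.of_nonneg_of_le (fun N => abs_nonneg _) hdgle (hWsum.mul_left c₀))
  refine ⟨g 0 + ∑' N, (g (N + 1) - g N), ?_⟩
  have hgN : ∀ N, g N = g 0 + ∑ j ∈ Finset.range N, (g (j + 1) - g j) := by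
    intro N
    rw [Finset.sum_range_sub (fun j => g j)]
    ring
  have ht := (hdgsum.hasSum.tendsto_sum_nat).const_add (g 0)
  exact Tendsto.congr (fun N => (hgN N).symm) ht

theorem stmt10 {K : ℕ} (B : Matrix (Fin K) (Fin K) ℝ)
    (hB : IsStochastic B) (hdiag : ∀ p, 0 < B p p)
    (T : ℕ) (hT : 1 ≤ T)
    (u : ℕ → ℝ) (hu : ∀ k, u (k + T) = u k)
    (husum : ∑ k ∈ Finset.range T, u k = 0) :
    ∃ Z : Matrix (Fin K) (Fin K) ℝ, ∀ p q,
      Tendsto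
        (fun N : ℕ => ∑ k ∈ Finset.range (N * T + 1), u k * (B ^ (N * T - k)) p q)
        atTop (𝓝 (Z p q)) := by
  have h : ∀ p q : Fin K, ∃ z : ℝ,
      Tendsto (fun N : ℕ => ∑ k ∈ Finset.range (N * T + 1), u k * (B ^ (N * T - k)) p q)
        atTop (𝓝 z) := by
    intro p q
    exact conv_aux T u hu husum (fun m => (B ^ m) p q) (summable_abs_pow_diff hB hdiag p q)
  choose Z hZ using h
  exact ⟨Matrix.of Z, hZ⟩
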